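/- (Duplication formula in genus 2.) For all a, b ∈ {0,1}² and every Ω ∈ H_2, one has θ_{a,b}(Ω)² = (1/4)·∑_{(b₁,b₂)} (−1)^{ᵗa·b₁}·θ[0; b₁/2](0, Ω/2)·θ[0; b₂/2](0, Ω/2), where the sum runs over the pairs (b₁,b₂) ∈ {0,1}² × {0,1}² with b₁ + b₂ ≡ b (mod 2). -/

import Mathlib

set_option maxHeartbeats 1000000

open Matrix

/-- The Siegel upper half-space: symmetric complex `g × g` matrices with positive
definite imaginary part. -/
def SiegelUpperHalf (g : ℕ) : Set (Matrix (Fin g) (Fin g) ℂ) :=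
  {Ω | Ω.IsSymm ∧ (Matrix.of fun i j => (Ω i j).im).PosDef}

/-- The general term of the theta series with characteristic `(a, b)`. -/
noncomputable def thetaTerm (g : ℕ) (a b : Fin g → ℚ) (z : Fin g → ℂ)
    (Ω : Matrix (Fin g) (Fin g) ℂ) (n : Fin g → ℤ) : ℂ :=
  Complex.exp (Real.pi * Complex.I *
      ((fun i => (n i : ℂ) + (a i : ℂ)) ⬝ᵥ Ω.mulVec (fun i => (n i : ℂ) + (a i : ℂ)))
    + 2 * Real.pi * Complex.I *
      ((fun i => (n i : ℂ) + (a i : ℂ)) ⬝ᵥ (fun i => z i + (b i : ℂ))))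

/-- The theta function with characteristic `(a, b)`. -/
noncomputable def theta (g : ℕ) (a b : Fin g → ℚ) (z : Fin g → ℂ)
    (Ω : Matrix (Fin g) (Fin g) ℂ) : ℂ :=
  ∑' n : Fin g → ℤ, thetaTerm g a b z Ω n

/-! ### Auxiliary lemmas -/

private lemma neg_one_zpow_ite (k : ℤ) : (-1 : ℂ) ^ k = if Even k then 1 else -1 := by
  rcases Int.even_or_odd k with h | h
  · rw [if_pos h, h.neg_one_zpow]
  · rw [if_neg (Int.not_even_iff_odd.2 h), h.neg_one_zpow]

private lemma cexp_pi_int (k : ℤ) :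
    Complex.exp ((Real.pi : ℂ) * Complex.I * k) = (-1 : ℂ) ^ k := by
  rw [mul_comm, Complex.exp_int_mul, Complex.exp_pi_mul_I]

private noncomputable def cf (A B : ℕ) (p q : ℤ) (y : ZMod 2) : ℂ :=
  (-1 : ℂ) ^ (A * y.val) *
    Complex.exp ((Real.pi : ℂ) * Complex.I * ((p * y.val + q * (((B : ZMod 2) + y).val) : ℤ) : ℂ))

private lemma coord (A B : ℕ) (hA : A = 0 ∨ A = 1) (hB : B = 0 ∨ B = 1) (p q : ℤ) :
    ∑ y : ZMod 2, cf A B p q y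
    = if Even (p + q + (A : ℤ)) then
        2 * Complex.exp ((Real.pi : ℂ) * Complex.I * ((q * B : ℤ) : ℂ)) else 0 := by
  have huniv : (Finset.univ : Finset (ZMod 2)) = {0, 1} := by decide
  rw [huniv, Finset.sum_insert (by decide), Finset.sum_singleton]
  simp only [cf, cexp_pi_int]
  rcases hA with rfl | rfl <;> rcases hB with rfl | rfl <;>
    simp only [Nat.cast_zero, Nat.cast_one, ZMod.val_zero, ZMod.val_one,
      show ((0 : ZMod 2) + 0).val = 0 from rfl, show ((0 : ZMod 2) + 1).val = 1 from rfl,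
      show ((1 : ZMod 2) + 0).val = 1 from rfl, show ((1 : ZMod 2) + 1).val = 0 from rfl,
      Nat.cast_ofNat, mul_zero, mul_one, zero_add, add_zero, pow_zero, pow_one, one_mul] <;>
    simp only [neg_one_zpow_ite] <;>
    split_ifs <;>
    first
      | ring1
      | (exfalso; simp only [Int.even_iff, Int.even_add, Int.not_even_iff] at *; omega)

private lemma filter_sum (a b : Fin 2 → ℕ) (ha : ∀ i, a i = 0 ∨ a i = 1)
    (hb : ∀ i, b i = 0 ∨ b i = 1) (p q : Fin 2 → ℤ) :
    ∑ x ∈ Finset.univ.filter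
        (fun x : (Fin 2 → ZMod 2) × (Fin 2 → ZMod 2) =>
          x.1 + x.2 = fun i => ((b i : ZMod 2))),
      ((-1 : ℂ) ^ (a 0 * (x.1 0).val + a 1 * (x.1 1).val) *
        Complex.exp ((Real.pi : ℂ) * Complex.I *
          ((p 0 * (x.1 0).val + p 1 * (x.1 1).val
            + q 0 * (x.2 0).val + q 1 * (x.2 1).val : ℤ) : ℂ)))
    = (if Even (p 0 + q 0 + (a 0 : ℤ)) then
        2 * Complex.exp ((Real.pi : ℂ) * Complex.I * ((q 0 * b 0 : ℤ) : ℂ)) else 0)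
      * (if Even (p 1 + q 1 + (a 1 : ℤ)) then
        2 * Complex.exp ((Real.pi : ℂ) * Complex.I * ((q 1 * b 1 : ℤ) : ℂ)) else 0) := by
  have hchar : ∀ u v : ZMod 2, (u + v) + u = v := by decide
  have hchar2 : ∀ u v : ZMod 2, u + (v + u) = v := by decide
  have himg : Finset.univ.filter
        (fun x : (Fin 2 → ZMod 2) × (Fin 2 → ZMod 2) =>
          x.1 + x.2 = fun i => ((b i : ZMod 2)))
      = Finset.image (fun y : Fin 2 → ZMod 2 => (y, (fun i => ((b i : ZMod 2))) + y))
          Finset.univ := by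
    ext x
    simp only [Finset.mem_filter, Finset.mem_univ, true_and, Finset.mem_image]
    constructor
    · rintro h
      refine ⟨x.1, ?_⟩
      have h2 : (fun i => ((b i : ZMod 2))) + x.1 = x.2 := by
        rw [← h]; funext i; simp only [Pi.add_apply]; exact hchar _ _
      rw [h2]
    · rintro ⟨y, rfl⟩
      funext i
      simp only [Pi.add_apply]
      exact hchar2 _ _
  rw [himg, Finset.sum_image (fun x _ y _ h => congrArg Prod.fst h)]
  have key : ∀ y : Fin 2 → ZMod 2,
      ((-1 : ℂ) ^ (a 0 * (y 0).val + a 1 * (y 1).val) *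
        Complex.exp ((Real.pi : ℂ) * Complex.I *
          ((p 0 * (y 0).val + p 1 * (y 1).val
            + q 0 * ((((fun i => ((b i : ZMod 2))) + y) 0).val)
            + q 1 * ((((fun i => ((b i : ZMod 2))) + y) 1).val) : ℤ) : ℂ)))
      = cf (a 0) (b 0) (p 0) (q 0) (y 0) * cf (a 1) (b 1) (p 1) (q 1) (y 1) := by
    intro y
    simp only [cf, Pi.add_apply]
    have hE : Complex.exp ((Real.pi : ℂ) * Complex.I *
          ((p 0 * (y 0).val + p 1 * (y 1).val
            + q 0 * (((b 0 : ZMod 2) + y 0).val)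
            + q 1 * (((b 1 : ZMod 2) + y 1).val) : ℤ) : ℂ))
        = Complex.exp ((Real.pi : ℂ) * Complex.I *
            ((p 0 * (y 0).val + q 0 * (((b 0 : ZMod 2) + y 0).val) : ℤ) : ℂ))
          * Complex.exp ((Real.pi : ℂ) * Complex.I *
            ((p 1 * (y 1).val + q 1 * (((b 1 : ZMod 2) + y 1).val) : ℤ) : ℂ)) := by
      rw [← Complex.exp_add]; congr 1; push_cast; ring
    rw [pow_add, hE]; ring
  rw [Finset.sum_congr rfl (fun y _ => key y)]
  rw [← Equiv.sum_comp (finTwoArrowEquiv (ZMod 2)).symm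
    (fun y => cf (a 0) (b 0) (p 0) (q 0) (y 0) * cf (a 1) (b 1) (p 1) (q 1) (y 1))]
  simp only [finTwoArrowEquiv_symm_apply, Matrix.cons_val_zero, Matrix.cons_val_one,
    Matrix.head_cons]
  rw [Fintype.sum_prod_type, ← Finset.sum_mul_sum]
  rw [coord (a 0) (b 0) (ha 0) (hb 0) (p 0) (q 0),
    coord (a 1) (b 1) (ha 1) (hb 1) (p 1) (q 1)]

private noncomputable def QF (Ω : Matrix (Fin 2) (Fin 2) ℂ) (v : Fin 2 → ℤ) : ℂ :=
  (v 0 : ℂ) * (Ω 0 0 * (v 0 : ℂ) + Ω 0 1 * (v 1 : ℂ))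
    + (v 1 : ℂ) * (Ω 1 0 * (v 0 : ℂ) + Ω 1 1 * (v 1 : ℂ))

private lemma master (a b : Fin 2 → ℕ) (ha : ∀ i, a i = 0 ∨ a i = 1)
    (hb : ∀ i, b i = 0 ∨ b i = 1) (Ω : Matrix (Fin 2) (Fin 2) ℂ) (p q : Fin 2 → ℤ) :
    ∑ x ∈ Finset.univ.filter
        (fun x : (Fin 2 → ZMod 2) × (Fin 2 → ZMod 2) =>
          x.1 + x.2 = fun i => ((b i : ZMod 2))),
      ((-1 : ℂ) ^ (a 0 * (x.1 0).val + a 1 * (x.1 1).val) *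
        thetaTerm 2 0 (fun i => ((x.1 i).val : ℚ) / 2) 0 ((2 : ℂ)⁻¹ • Ω) p *
        thetaTerm 2 0 (fun i => ((x.2 i).val : ℚ) / 2) 0 ((2 : ℂ)⁻¹ • Ω) q)
    = if Even (p 0 + q 0 + (a 0 : ℤ)) ∧ Even (p 1 + q 1 + (a 1 : ℤ)) then
        4 * Complex.exp ((Real.pi : ℂ) * Complex.I * 2⁻¹ * (QF Ω p + QF Ω q)
            + (Real.pi : ℂ) * Complex.I * ((q 0 * b 0 + q 1 * b 1 : ℤ) : ℂ))
      else 0 := by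
  have step : ∀ x ∈ Finset.univ.filter
        (fun x : (Fin 2 → ZMod 2) × (Fin 2 → ZMod 2) =>
          x.1 + x.2 = fun i => ((b i : ZMod 2))),
      ((-1 : ℂ) ^ (a 0 * (x.1 0).val + a 1 * (x.1 1).val) *
        thetaTerm 2 0 (fun i => ((x.1 i).val : ℚ) / 2) 0 ((2 : ℂ)⁻¹ • Ω) p *
        thetaTerm 2 0 (fun i => ((x.2 i).val : ℚ) / 2) 0 ((2 : ℂ)⁻¹ • Ω) q)
      = Complex.exp ((Real.pi : ℂ) * Complex.I * 2⁻¹ * (QF Ω p + QF Ω q)) *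
          ((-1 : ℂ) ^ (a 0 * (x.1 0).val + a 1 * (x.1 1).val) *
            Complex.exp ((Real.pi : ℂ) * Complex.I *
              ((p 0 * (x.1 0).val + p 1 * (x.1 1).val
                + q 0 * (x.2 0).val + q 1 * (x.2 1).val : ℤ) : ℂ))) := by
    intro x _
    simp only [thetaTerm, dotProduct, Matrix.mulVec, Fin.sum_univ_two, Matrix.smul_apply,
      smul_eq_mul, Pi.zero_apply, zero_add, Rat.cast_zero, add_zero, Rat.cast_div,
      Rat.cast_natCast, Rat.cast_ofNat]
    rw [mul_assoc, ← Complex.exp_add]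
    have hE : Complex.exp (((Real.pi:ℂ) * Complex.I *
          ((p 0 : ℂ) * (2⁻¹ * Ω 0 0 * (p 0:ℂ) + 2⁻¹ * Ω 0 1 * (p 1:ℂ)) +
            (p 1:ℂ) * (2⁻¹ * Ω 1 0 * (p 0:ℂ) + 2⁻¹ * Ω 1 1 * (p 1:ℂ))) +
          2 * (Real.pi:ℂ) * Complex.I * ((p 0:ℂ) * (((x.1 0).val:ℂ) / 2) + (p 1:ℂ) * (((x.1 1).val:ℂ) / 2)) +
          ((Real.pi:ℂ) * Complex.I *
            ((q 0:ℂ) * (2⁻¹ * Ω 0 0 * (q 0:ℂ) + 2⁻¹ * Ω 0 1 * (q 1:ℂ)) +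
              (q 1:ℂ) * (2⁻¹ * Ω 1 0 * (q 0:ℂ) + 2⁻¹ * Ω 1 1 * (q 1:ℂ))) +
            2 * (Real.pi:ℂ) * Complex.I * ((q 0:ℂ) * (((x.2 0).val:ℂ) / 2) + (q 1:ℂ) * (((x.2 1).val:ℂ) / 2)))))
        = Complex.exp ((Real.pi : ℂ) * Complex.I * 2⁻¹ * (QF Ω p + QF Ω q)) *
          Complex.exp ((Real.pi : ℂ) * Complex.I *
            ((p 0 * (x.1 0).val + p 1 * (x.1 1).val
              + q 0 * (x.2 0).val + q 1 * (x.2 1).val : ℤ) : ℂ)) := by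
      rw [← Complex.exp_add]; congr 1; simp only [QF]; push_cast; ring
    rw [hE]; ring
  rw [Finset.sum_congr rfl step, ← Finset.mul_sum, filter_sum a b ha hb p q]
  by_cases h0 : Even (p 0 + q 0 + (a 0 : ℤ)) <;>
    by_cases h1 : Even (p 1 + q 1 + (a 1 : ℤ)) <;>
    simp only [h0, h1, if_true, if_false, and_true, and_false, true_and, false_and,
      mul_zero, zero_mul]
  rw [show (4 : ℂ) * Complex.exp ((Real.pi : ℂ) * Complex.I * 2⁻¹ * (QF Ω p + QF Ω q)
        + (Real.pi : ℂ) * Complex.I * ((q 0 * b 0 + q 1 * b 1 : ℤ) : ℂ))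
      = 4 * (Complex.exp ((Real.pi : ℂ) * Complex.I * 2⁻¹ * (QF Ω p + QF Ω q))
          * (Complex.exp ((Real.pi : ℂ) * Complex.I * ((q 0 * b 0 : ℤ) : ℂ))
            * Complex.exp ((Real.pi : ℂ) * Complex.I * ((q 1 * b 1 : ℤ) : ℂ)))) by
    rw [← Complex.exp_add, ← Complex.exp_add]; congr 2; push_cast; ring]
  ring

private lemma posdef_bound {Y : Matrix (Fin 2) (Fin 2) ℝ} (hY : Y.PosDef) :
    ∃ c : ℝ, 0 < c ∧ ∀ v0 v1 : ℝ,
      c * (v0 ^ 2 + v1 ^ 2) ≤ v0 * (Y 0 0 * v0 + Y 0 1 * v1) + v1 * (Y 1 0 * v0 + Y 1 1 * v1) := by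
  have hsym : Y 1 0 = Y 0 1 := by
    have h := congrFun (congrFun hY.1 0) 1
    simpa [Matrix.conjTranspose_apply] using h
  have hA : 0 < Y 0 0 := by
    have h := hY.dotProduct_mulVec_pos (x := ![1, 0]) (by
      intro h; have := congrFun h 0; simp at this)
    simpa [dotProduct, Matrix.mulVec, Fin.sum_univ_two] using h
  have hC : 0 < Y 1 1 := by
    have h := hY.dotProduct_mulVec_pos (x := ![0, 1]) (by
      intro h; have := congrFun h 1; simp at this)
    simpa [dotProduct, Matrix.mulVec, Fin.sum_univ_two] using h
  have hdet : 0 < Y 0 0 * Y 1 1 - Y 0 1 * Y 0 1 := by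
    have h := hY.det_pos
    rw [Matrix.det_fin_two, hsym] at h
    linarith
  refine ⟨(Y 0 0 * Y 1 1 - Y 0 1 * Y 0 1) / (Y 0 0 + Y 1 1), by positivity, fun v0 v1 => ?_⟩
  rw [div_mul_eq_mul_div, div_le_iff₀ (by positivity), hsym]
  nlinarith [sq_nonneg (Y 0 0 * v0 + Y 0 1 * v1), sq_nonneg (Y 0 1 * v0 + Y 1 1 * v1)]

private lemma summable_exp_shift (c t : ℝ) (hc : 0 < c) :
    Summable fun n : ℤ => Real.exp (-(c * ((n : ℝ) + t) ^ 2)) := by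
  have hpi := Real.pi_pos
  have h := summable_pow_mul_jacobiTheta₂_term_bound (c * |t| / Real.pi)
    (T := c / Real.pi) (by positivity) 0
  refine h.of_nonneg_of_le (fun n => (Real.exp_pos _).le) (fun n => ?_)
  simp only [pow_zero, one_mul]
  rw [Real.exp_le_exp]
  have h1 : -Real.pi * (c / Real.pi * (n : ℝ) ^ 2 - 2 * (c * |t| / Real.pi) * ((|n| : ℤ) : ℝ))
      = -(c * (n : ℝ) ^ 2) + 2 * c * |t| * |(n : ℝ)| := by
    push_cast [Int.cast_abs]
    field_simp
    ring
  rw [h1]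
  have h2 : -(|(n : ℝ) * t|) ≤ (n : ℝ) * t := neg_abs_le _
  rw [abs_mul] at h2
  nlinarith [abs_nonneg (n : ℝ), abs_nonneg t, sq_nonneg t, _root_.sq_abs (n : ℝ)]

private lemma summable_norm_theta (aq bq : Fin 2 → ℚ) {Ω : Matrix (Fin 2) (Fin 2) ℂ}
    (hΩ : (Matrix.of fun i j => (Ω i j).im).PosDef) :
    Summable fun n : Fin 2 → ℤ => ‖thetaTerm 2 aq bq 0 Ω n‖ := by
  obtain ⟨c, hc, hineq⟩ := posdef_bound hΩ
  simp only [Matrix.of_apply] at hineq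
  have hpi := Real.pi_pos
  have hs0 : Summable fun k : ℤ =>
      Real.exp (-(Real.pi * c * ((k : ℝ) + (aq 0 : ℝ)) ^ 2)) :=
    summable_exp_shift _ _ (by positivity)
  have hs1 : Summable fun k : ℤ =>
      Real.exp (-(Real.pi * c * ((k : ℝ) + (aq 1 : ℝ)) ^ 2)) :=
    summable_exp_shift _ _ (by positivity)
  have hprod : Summable fun mn : ℤ × ℤ =>
      Real.exp (-(Real.pi * c * ((mn.1 : ℝ) + (aq 0 : ℝ)) ^ 2))
        * Real.exp (-(Real.pi * c * ((mn.2 : ℝ) + (aq 1 : ℝ)) ^ 2)) :=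
    hs0.mul_of_nonneg hs1 (fun _ => (Real.exp_pos _).le) (fun _ => (Real.exp_pos _).le)
  have hcomp : Summable fun n : Fin 2 → ℤ =>
      Real.exp (-(Real.pi * c * ((n 0 : ℝ) + (aq 0 : ℝ)) ^ 2))
        * Real.exp (-(Real.pi * c * ((n 1 : ℝ) + (aq 1 : ℝ)) ^ 2)) :=
    (finTwoArrowEquiv ℤ).summable_iff.mpr hprod
  refine hcomp.of_nonneg_of_le (fun n => norm_nonneg _) (fun n => ?_)
  rw [thetaTerm, Complex.norm_exp, ← Real.exp_add, Real.exp_le_exp]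
  have hre : (Real.pi * Complex.I *
      ((fun i => ((n i : ℂ)) + ((aq i : ℚ) : ℂ)) ⬝ᵥ
        Ω.mulVec (fun i => ((n i : ℂ)) + ((aq i : ℚ) : ℂ)))
    + 2 * Real.pi * Complex.I *
      ((fun i => ((n i : ℂ)) + ((aq i : ℚ) : ℂ)) ⬝ᵥ
        (fun i => (0 : Fin 2 → ℂ) i + ((bq i : ℚ) : ℂ)))).re
      = -(Real.pi * (((n 0 : ℝ) + (aq 0 : ℝ)) * ((Ω 0 0).im * ((n 0 : ℝ) + (aq 0 : ℝ))
            + (Ω 0 1).im * ((n 1 : ℝ) + (aq 1 : ℝ)))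
          + ((n 1 : ℝ) + (aq 1 : ℝ)) * ((Ω 1 0).im * ((n 0 : ℝ) + (aq 0 : ℝ))
            + (Ω 1 1).im * ((n 1 : ℝ) + (aq 1 : ℝ))))) := by
    simp only [dotProduct, Matrix.mulVec, Fin.sum_univ_two, Pi.zero_apply, zero_add,
      Complex.add_re, Complex.mul_re, Complex.mul_im, Complex.add_im, Complex.I_re,
      Complex.I_im, Complex.ofReal_re, Complex.ofReal_im, Complex.intCast_re,
      Complex.intCast_im, Complex.ratCast_re, Complex.ratCast_im, Complex.im_ofNat,
      Complex.re_ofNat]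
    ring
  rw [hre]
  have := hineq ((n 0 : ℝ) + (aq 0 : ℝ)) ((n 1 : ℝ) + (aq 1 : ℝ))
  nlinarith

private lemma half_im_posdef {Ω : Matrix (Fin 2) (Fin 2) ℂ}
    (hpos : (Matrix.of fun i j => (Ω i j).im).PosDef) :
    (Matrix.of fun i j => ((((2 : ℂ)⁻¹ • Ω) i j)).im).PosDef := by
  have key : (Matrix.of fun i j => ((((2 : ℂ)⁻¹ • Ω) i j)).im)
      = (2⁻¹ : ℝ) • (Matrix.of fun i j => (Ω i j).im) := by
    ext i j
    simp [Matrix.smul_apply, Complex.mul_im]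
  rw [key]
  refine Matrix.PosDef.of_dotProduct_mulVec_pos ?_ (fun x hx => ?_)
  · rw [Matrix.IsHermitian, Matrix.conjTranspose_smul, hpos.1, star_trivial]
  · rw [Matrix.smul_mulVec, dotProduct_smul, smul_eq_mul]
    have := hpos.dotProduct_mulVec_pos hx
    positivity

/-- The duplication formula in genus 2: `θ_{a,b}(Ω)²` is a quarter of the sum of
`(-1)^{ᵗa·b₁} θ[0;b₁/2](0,Ω/2) θ[0;b₂/2](0,Ω/2)` over the pairs `(b₁,b₂)` in
`{0,1}² × {0,1}²` with `b₁ + b₂ ≡ b (mod 2)`. -/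
theorem duplication_formula (a b : Fin 2 → ℕ)
    (ha : ∀ i, a i = 0 ∨ a i = 1) (hb : ∀ i, b i = 0 ∨ b i = 1)
    (Ω : Matrix (Fin 2) (Fin 2) ℂ) (hΩ : Ω ∈ SiegelUpperHalf 2) :
    theta 2 (fun i => (a i : ℚ) / 2) (fun i => (b i : ℚ) / 2) 0 Ω ^ 2 =
      (1 / 4 : ℂ) * ∑ q ∈ Finset.univ.filter
          (fun q : (Fin 2 → ZMod 2) × (Fin 2 → ZMod 2) =>
            q.1 + q.2 = fun i => ((b i : ZMod 2))),
        ((-1 : ℂ) ^ (a 0 * (q.1 0).val + a 1 * (q.1 1).val) *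
          theta 2 0 (fun i => ((q.1 i).val : ℚ) / 2) 0 ((2 : ℂ)⁻¹ • Ω) *
          theta 2 0 (fun i => ((q.2 i).val : ℚ) / 2) 0 ((2 : ℂ)⁻¹ • Ω)) := by
  obtain ⟨hsymm, hpos⟩ := hΩ
  have hsym : Ω 1 0 = Ω 0 1 := by
    have h := congrFun (congrFun hsymm 0) 1
    simpa [Matrix.transpose_apply] using h
  have hpos' := half_im_posdef hpos
  have hT : Summable fun n : Fin 2 → ℤ =>
      ‖thetaTerm 2 (fun i => (a i : ℚ) / 2) (fun i => (b i : ℚ) / 2) 0 Ω n‖ :=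
    summable_norm_theta _ _ hpos
  have hTx : ∀ c : Fin 2 → ZMod 2,
      Summable fun n : Fin 2 → ℤ =>
        ‖thetaTerm 2 0 (fun i => ((c i).val : ℚ) / 2) 0 ((2 : ℂ)⁻¹ • Ω) n‖ :=
    fun c => summable_norm_theta _ _ hpos'
  set t : (Fin 2 → ℤ) → ℂ :=
    thetaTerm 2 (fun i => (a i : ℚ) / 2) (fun i => (b i : ℚ) / 2) 0 Ω with ht
  set e : (Fin 2 → ℤ) × (Fin 2 → ℤ) → (Fin 2 → ℤ) × (Fin 2 → ℤ) :=
    fun mn => (mn.1 - mn.2, mn.1 + mn.2 + fun i => (a i : ℤ)) with he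
  set G : (Fin 2 → ℤ) × (Fin 2 → ℤ) → ℂ := fun pq =>
    (1 / 4 : ℂ) * ∑ x ∈ Finset.univ.filter
        (fun x : (Fin 2 → ZMod 2) × (Fin 2 → ZMod 2) =>
          x.1 + x.2 = fun i => ((b i : ZMod 2))),
      ((-1 : ℂ) ^ (a 0 * (x.1 0).val + a 1 * (x.1 1).val) *
        thetaTerm 2 0 (fun i => ((x.1 i).val : ℚ) / 2) 0 ((2 : ℂ)⁻¹ • Ω) pq.1 *
        thetaTerm 2 0 (fun i => ((x.2 i).val : ℚ) / 2) 0 ((2 : ℂ)⁻¹ • Ω) pq.2) with hG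
  have hGe : ∀ mn : (Fin 2 → ℤ) × (Fin 2 → ℤ), t mn.1 * t mn.2 = G (e mn) := by
    intro mn
    show t mn.1 * t mn.2 = (1 / 4 : ℂ) * _
    rw [master a b ha hb Ω (mn.1 - mn.2) (mn.1 + mn.2 + fun i => (a i : ℤ))]
    have hcond0 : Even ((mn.1 - mn.2) 0 + (mn.1 + mn.2 + fun i => (a i : ℤ)) 0 + (a 0 : ℤ)) :=
      ⟨mn.1 0 + (a 0 : ℤ), by simp only [Pi.sub_apply, Pi.add_apply]; ring⟩
    have hcond1 : Even ((mn.1 - mn.2) 1 + (mn.1 + mn.2 + fun i => (a i : ℤ)) 1 + (a 1 : ℤ)) :=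
      ⟨mn.1 1 + (a 1 : ℤ), by simp only [Pi.sub_apply, Pi.add_apply]; ring⟩
    rw [if_pos ⟨hcond0, hcond1⟩]
    rw [show ∀ z : ℂ, (1 / 4 : ℂ) * (4 * Complex.exp z) = Complex.exp z from fun z => by ring]
    rw [ht]
    simp only [thetaTerm, QF, dotProduct, Matrix.mulVec, Fin.sum_univ_two,
      Pi.zero_apply, zero_add, Pi.sub_apply, Pi.add_apply]
    rw [← Complex.exp_add]
    congr 1
    rw [hsym]
    push_cast
    ring
  have hinj : Function.Injective e := by
    intro x y hxy
    have h1 := congrArg Prod.fst hxy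
    have h2 := congrArg Prod.snd hxy
    simp only [he] at h1 h2
    have e1 : x.1 = y.1 := by
      funext i
      have a1 := congrFun h1 i
      have a2 := congrFun h2 i
      simp only [Pi.sub_apply, Pi.add_apply] at a1 a2
      omega
    have e2 : x.2 = y.2 := by
      funext i
      have a1 := congrFun h1 i
      have a2 := congrFun h2 i
      simp only [Pi.sub_apply, Pi.add_apply] at a1 a2
      omega
    exact Prod.ext_iff.mpr ⟨e1, e2⟩
  have hsupp : Function.support G ⊆ Set.range e := by
    intro pq hpq
    rw [Function.mem_support, hG] at hpq
    beta_reduce at hpq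
    rw [master a b ha hb Ω pq.1 pq.2] at hpq
    by_cases hcond : Even (pq.1 0 + pq.2 0 + (a 0 : ℤ)) ∧ Even (pq.1 1 + pq.2 1 + (a 1 : ℤ))
    · obtain ⟨h0, h1⟩ := hcond
      rw [Int.even_iff] at h0 h1
      have hEv : ∀ i, (pq.1 i + pq.2 i + (a i : ℤ)) % 2 = 0 := by
        intro i; fin_cases i
        · simpa using h0
        · simpa using h1
      refine ⟨(fun i => (pq.1 i + pq.2 i - (a i : ℤ)) / 2,
        fun i => (pq.2 i - pq.1 i - (a i : ℤ)) / 2), ?_⟩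
      have hc1 : (fun i => (pq.1 i + pq.2 i - (a i : ℤ)) / 2)
          - (fun i => (pq.2 i - pq.1 i - (a i : ℤ)) / 2) = pq.1 := by
        funext i
        simp only [Pi.sub_apply]
        have := hEv i
        omega
      have hc2 : ((fun i => (pq.1 i + pq.2 i - (a i : ℤ)) / 2)
          + (fun i => (pq.2 i - pq.1 i - (a i : ℤ)) / 2) + fun i => (a i : ℤ)) = pq.2 := by
        funext i
        simp only [Pi.add_apply]
        have := hEv i
        omega
      show ((fun i => (pq.1 i + pq.2 i - (a i : ℤ)) / 2)
          - (fun i => (pq.2 i - pq.1 i - (a i : ℤ)) / 2),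
        (fun i => (pq.1 i + pq.2 i - (a i : ℤ)) / 2)
          + (fun i => (pq.2 i - pq.1 i - (a i : ℤ)) / 2) + fun i => (a i : ℤ)) = pq
      rw [hc1, hc2]
    · rw [if_neg hcond, mul_zero] at hpq
      exact absurd rfl hpq
  calc theta 2 (fun i => (a i : ℚ) / 2) (fun i => (b i : ℚ) / 2) 0 Ω ^ 2
      = ∑' mn : (Fin 2 → ℤ) × (Fin 2 → ℤ), t mn.1 * t mn.2 := by
        rw [sq, theta, tsum_mul_tsum_of_summable_norm hT hT]
    _ = ∑' mn : (Fin 2 → ℤ) × (Fin 2 → ℤ), G (e mn) := tsum_congr hGe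
    _ = ∑' pq : (Fin 2 → ℤ) × (Fin 2 → ℤ), G pq := hinj.tsum_eq hsupp
    _ = (1 / 4 : ℂ) * ∑' pq : (Fin 2 → ℤ) × (Fin 2 → ℤ),
          ∑ x ∈ Finset.univ.filter
            (fun x : (Fin 2 → ZMod 2) × (Fin 2 → ZMod 2) =>
              x.1 + x.2 = fun i => ((b i : ZMod 2))),
          ((-1 : ℂ) ^ (a 0 * (x.1 0).val + a 1 * (x.1 1).val) *
            thetaTerm 2 0 (fun i => ((x.1 i).val : ℚ) / 2) 0 ((2 : ℂ)⁻¹ • Ω) pq.1 *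
            thetaTerm 2 0 (fun i => ((x.2 i).val : ℚ) / 2) 0 ((2 : ℂ)⁻¹ • Ω) pq.2) := by
        rw [hG, tsum_mul_left]
    _ = (1 / 4 : ℂ) * ∑ x ∈ Finset.univ.filter
            (fun x : (Fin 2 → ZMod 2) × (Fin 2 → ZMod 2) =>
              x.1 + x.2 = fun i => ((b i : ZMod 2))),
          ∑' pq : (Fin 2 → ℤ) × (Fin 2 → ℤ),
          ((-1 : ℂ) ^ (a 0 * (x.1 0).val + a 1 * (x.1 1).val) *
            thetaTerm 2 0 (fun i => ((x.1 i).val : ℚ) / 2) 0 ((2 : ℂ)⁻¹ • Ω) pq.1 *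
            thetaTerm 2 0 (fun i => ((x.2 i).val : ℚ) / 2) 0 ((2 : ℂ)⁻¹ • Ω) pq.2) := by
        congr 1
        refine Summable.tsum_finsetSum fun x _ => ?_
        have hs := summable_mul_of_summable_norm (hTx x.1) (hTx x.2)
        simpa [mul_assoc] using hs.mul_left
          ((-1 : ℂ) ^ (a 0 * (x.1 0).val + a 1 * (x.1 1).val))
    _ = _ := by
        congr 1
        refine Finset.sum_congr rfl fun x _ => ?_
        have hassoc : ∀ pq : (Fin 2 → ℤ) × (Fin 2 → ℤ),
            ((-1 : ℂ) ^ (a 0 * (x.1 0).val + a 1 * (x.1 1).val) *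
              thetaTerm 2 0 (fun i => ((x.1 i).val : ℚ) / 2) 0 ((2 : ℂ)⁻¹ • Ω) pq.1 *
              thetaTerm 2 0 (fun i => ((x.2 i).val : ℚ) / 2) 0 ((2 : ℂ)⁻¹ • Ω) pq.2)
            = (-1 : ℂ) ^ (a 0 * (x.1 0).val + a 1 * (x.1 1).val) *
              (thetaTerm 2 0 (fun i => ((x.1 i).val : ℚ) / 2) 0 ((2 : ℂ)⁻¹ • Ω) pq.1 *
                thetaTerm 2 0 (fun i => ((x.2 i).val : ℚ) / 2) 0 ((2 : ℂ)⁻¹ • Ω) pq.2) :=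
          fun pq => by ring
        rw [tsum_congr hassoc, tsum_mul_left, theta, theta,
          ← tsum_mul_tsum_of_summable_norm (hTx x.1) (hTx x.2)]
        ring
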